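/- arXiv:2211.01828 — 2 statements merged into one kernel-verified Lean document; each statement's English description precedes it below -/
import Mathlib

section
/- Let c ∈ ℝ and p_n = (log n + c)/n. Suppose (τ_n) is a sequence of integers with τ_n = n + O(√n) (i.e. (τ_n - n)/√n is bounded). Then n·(1 - p_n)^{τ_n} → e^{-c} as n → ∞, and hence exp(-n(1 - p_n)^{τ_n}) → e^{-e^{-c}}. -/
open Filter Real Topology

lemma aux_log_one_sub_bound {x : ℝ} (hx : |x| ≤ 1/2) :
    |Real.log (1 - x) + x| ≤ 2 * x ^ 2 := by
  have h1 : |x| < 1 := lt_of_le_of_lt hx (by norm_num)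
  have h := Real.abs_log_sub_add_sum_range_le h1 1
  simp only [Finset.range_one, Finset.sum_singleton, pow_one, Nat.cast_zero, zero_add,
    div_one] at h
  rw [add_comm x (Real.log (1 - x))] at h
  refine h.trans ?_
  have h2 : (1:ℝ)/2 ≤ 1 - |x| := by linarith
  have h3 : |x| ^ 2 / (1 - |x|) ≤ |x| ^ 2 / (1/2) :=
    div_le_div_of_nonneg_left (by positivity) (by norm_num) h2
  calc |x| ^ (1+1) / (1 - |x|) ≤ |x|^2/(1/2) := h3
    _ = 2 * x ^ 2 := by rw [sq_abs]; ring

lemma aux_log_one_sub_abs {x : ℝ} (hx : |x| ≤ 1/2) :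
    |Real.log (1 - x)| ≤ 2 * |x| := by
  have h := aux_log_one_sub_bound hx
  have h' : |Real.log (1 - x)| ≤ |Real.log (1 - x) + x| + |x| := by
    calc |Real.log (1 - x)| = |(Real.log (1 - x) + x) + (-x)| := by ring_nf
      _ ≤ |Real.log (1 - x) + x| + |(-x)| := abs_add_le _ _
      _ = |Real.log (1 - x) + x| + |x| := by rw [abs_neg]
  have hsq : x ^ 2 ≤ (1/2) * |x| := by
    have hx2 : x ^ 2 = |x| * |x| := by rw [← sq_abs]; ring
    rw [hx2]
    exact mul_le_mul_of_nonneg_right hx (abs_nonneg _)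
  linarith

/-- For `p_n = (log n + c)/n` and integers `τ_n = n + O(√n)`, we have
`n (1 - p_n)^{τ_n} → e^{-c}` and `exp(-n (1 - p_n)^{τ_n}) → e^{-e^{-c}}`. -/
theorem connectedness_limit (c : ℝ) (τ : ℕ → ℕ)
    (hτ : ∃ C : ℝ, ∀ n : ℕ, |(τ n : ℝ) - n| ≤ C * Real.sqrt n) :
    Tendsto (fun n : ℕ => (n : ℝ) * (1 - (Real.log n + c) / n) ^ (τ n))
      atTop (nhds (Real.exp (-c))) ∧
    Tendsto (fun n : ℕ => Real.exp (-((n : ℝ) * (1 - (Real.log n + c) / n) ^ (τ n))))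
      atTop (nhds (Real.exp (-Real.exp (-c)))) := by
  obtain ⟨C, hC⟩ := hτ
  set x : ℕ → ℝ := fun n => (Real.log n + c) / n with hxdef
  -- basic limits
  have hlog1 : Tendsto (fun n : ℕ => Real.log n / n) atTop (𝓝 0) := by
    have := (Real.tendsto_pow_log_div_mul_add_atTop 1 0 1 one_ne_zero).comp
      tendsto_natCast_atTop_atTop
    simpa [Function.comp_def] using this
  have hlog2 : Tendsto (fun n : ℕ => (Real.log n) ^ 2 / n) atTop (𝓝 0) := by
    have := (Real.tendsto_pow_log_div_mul_add_atTop 1 0 2 one_ne_zero).comp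
      tendsto_natCast_atTop_atTop
    simpa [Function.comp_def] using this
  have hconst : ∀ a : ℝ, Tendsto (fun n : ℕ => a / n) atTop (𝓝 0) := fun a =>
    tendsto_const_div_atTop_nhds_zero_nat a
  have hx0 : Tendsto x atTop (𝓝 0) := by
    have := hlog1.add (hconst c)
    simp only [add_zero] at this
    refine this.congr fun n => ?_
    simp [hxdef, add_div]
  -- L1 : (log n + c)^2 / n → 0
  have L1 : Tendsto (fun n : ℕ => (Real.log n + c) ^ 2 / n) atTop (𝓝 0) := by
    have h := hlog2.add ((hlog1.const_mul (2 * c)).add (hconst (c ^ 2)))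
    simp only [add_zero, mul_zero] at h
    refine h.congr fun n => ?_
    ring
  -- L2 : (log n + c)/√n → 0
  have hsqrt : Tendsto (fun n : ℕ => Real.sqrt n) atTop atTop := by
    have := (tendsto_rpow_atTop (by norm_num : (0:ℝ) < 1/2)).comp tendsto_natCast_atTop_atTop
    refine this.congr fun n => ?_
    simp [Function.comp, Real.sqrt_eq_rpow]
  have key : Tendsto (fun y : ℝ => (2 * Real.log y + c) / y) atTop (𝓝 0) := by
    have h1 : Tendsto (fun y : ℝ => Real.log y / y) atTop (𝓝 0) := by
      have := Real.tendsto_pow_log_div_mul_add_atTop 1 0 1 one_ne_zero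
      simpa using this
    have h2 : Tendsto (fun y : ℝ => c / y) atTop (𝓝 0) :=
      tendsto_const_nhds.div_atTop tendsto_id
    have := (h1.const_mul 2).add h2
    simp only [mul_zero, add_zero] at this
    refine this.congr fun y => ?_
    ring
  have L2 : Tendsto (fun n : ℕ => (Real.log n + c) / Real.sqrt n) atTop (𝓝 0) := by
    have h := key.comp hsqrt
    refine h.congr' ?_
    filter_upwards [eventually_ge_atTop 1] with n hn
    have hn0 : (0:ℝ) ≤ n := Nat.cast_nonneg n
    have hls : Real.log (Real.sqrt n) = Real.log n / 2 := Real.log_sqrt hn0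
    simp only [Function.comp_apply, hls]
    ring_nf
  -- eventual smallness of x
  have hxsmall : ∀ᶠ n in atTop, |x n| ≤ 1/2 :=
    (hx0.abs.eventually_le_const (by norm_num : |(0:ℝ)| < 1/2))
  -- the log of the expression tends to -c
  set f : ℕ → ℝ := fun n => Real.log n + (τ n : ℝ) * Real.log (1 - x n) with hfdef
  have hf : Tendsto f atTop (𝓝 (-c)) := by
    have hbound : ∀ᶠ n in atTop,
        |f n + c| ≤ 2 * ((Real.log n + c) ^ 2 / n) + 2 * C * |(Real.log n + c) / Real.sqrt n| := by
      filter_upwards [hxsmall, eventually_ge_atTop 1] with n hxn hn1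
      have hn0 : (0:ℝ) < n := by exact_mod_cast hn1
      have hxeq : (n : ℝ) * x n = Real.log n + c := by
        simp only [hxdef]
        field_simp
      have hrw : f n + c = (n : ℝ) * (Real.log (1 - x n) + x n)
          + ((τ n : ℝ) - n) * Real.log (1 - x n) := by
        simp only [hfdef]
        linear_combination -hxeq
      rw [hrw]
      have h1 : |(n : ℝ) * (Real.log (1 - x n) + x n)| ≤ (n:ℝ) * (2 * (x n)^2) := by
        rw [abs_mul, abs_of_pos hn0]
        exact mul_le_mul_of_nonneg_left (aux_log_one_sub_bound hxn) hn0.le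
      have h2 : |((τ n : ℝ) - n) * Real.log (1 - x n)| ≤ (C * Real.sqrt n) * (2 * |x n|) := by
        rw [abs_mul]
        exact mul_le_mul (hC n) (aux_log_one_sub_abs hxn) (abs_nonneg _)
          ((abs_nonneg _).trans (hC n))
      have hs : Real.sqrt n * Real.sqrt n = (n:ℝ) := Real.mul_self_sqrt (Nat.cast_nonneg n)
      have hs0 : (0:ℝ) < Real.sqrt n := Real.sqrt_pos.2 hn0
      have e1 : (n:ℝ) * (2 * (x n)^2) = 2 * ((Real.log n + c) ^ 2 / n) := by
        simp only [hxdef]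
        field_simp
      have e2 : (C * Real.sqrt n) * (2 * |x n|) = 2 * C * |(Real.log n + c) / Real.sqrt n| := by
        simp only [hxdef]
        rw [abs_div, abs_div, abs_of_pos hn0, abs_of_pos hs0]
        field_simp
        linear_combination (C * |Real.log n + c|) * hs
      calc |(n : ℝ) * (Real.log (1 - x n) + x n) + ((τ n : ℝ) - n) * Real.log (1 - x n)|
          ≤ |(n : ℝ) * (Real.log (1 - x n) + x n)| + |((τ n : ℝ) - n) * Real.log (1 - x n)| :=
            abs_add_le _ _
        _ ≤ (n:ℝ) * (2 * (x n)^2) + (C * Real.sqrt n) * (2 * |x n|) := add_le_add h1 h2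
        _ = 2 * ((Real.log n + c) ^ 2 / n) + 2 * C * |(Real.log n + c) / Real.sqrt n| := by
            rw [e1, e2]
    have htend : Tendsto (fun n : ℕ =>
        2 * ((Real.log n + c) ^ 2 / n) + 2 * C * |(Real.log n + c) / Real.sqrt n|)
        atTop (𝓝 0) := by
      have := (L1.const_mul 2).add ((L2.abs).const_mul (2 * C))
      simpa using this
    have hz : Tendsto (fun n : ℕ => f n + c) atTop (𝓝 0) :=
      squeeze_zero_norm' hbound htend
    have := hz.sub_const c
    simpa using this
  have hfirst : Tendsto (fun n : ℕ => (n : ℝ) * (1 - (Real.log n + c) / n) ^ (τ n))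
      atTop (𝓝 (Real.exp (-c))) := by
    have hexp : Tendsto (fun n : ℕ => Real.exp (f n)) atTop (𝓝 (Real.exp (-c))) :=
      (Real.continuous_exp.tendsto _).comp hf
    refine hexp.congr' ?_
    filter_upwards [hxsmall, eventually_ge_atTop 1] with n hxn hn1
    have hn0 : (0:ℝ) < n := by exact_mod_cast hn1
    have h1x : (0:ℝ) < 1 - x n := by
      have := (abs_le.mp hxn).2
      linarith
    simp only [hfdef]
    rw [Real.exp_add, Real.exp_log hn0, Real.exp_nat_mul, Real.exp_log h1x]
  refine ⟨hfirst, ?_⟩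
  have hcont : Tendsto (fun y : ℝ => Real.exp (-y)) (𝓝 (Real.exp (-c)))
      (𝓝 (Real.exp (-Real.exp (-c)))) :=
    (Real.continuous_exp.comp continuous_neg).continuousAt
  exact hcont.comp hfirst
end

section
/- Let (N(t))_{t≥0} be a unit-rate Poisson counting process, c > 0, and define S^{(n)}_k = N(n(1 - (1 - c/n)^k)) - k. Then for every T > 0 and ε > 0, P( sup_{0 ≤ t ≤ T} | S^{(n)}_{⌊nt⌋}/n - (1 - e^{-ct} - t) | > ε ) → 0 as n → ∞. -/
open MeasureTheory ProbabilityTheory Filter Real Nat NNReal ENNReal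

set_option maxHeartbeats 1000000

lemma exp_tsum (x : ℝ) : (∑' k : ℕ, x ^ k / k !) = Real.exp x := by
  rw [Real.exp_eq_exp_ℝ, NormedSpace.exp_eq_tsum_div]

lemma sum_shift2 (x : ℝ) :
    Summable (fun k : ℕ => x ^ k / k ! * ((k:ℝ) * ((k:ℝ)-1))) ∧
      (∑' k : ℕ, x ^ k / k ! * ((k:ℝ) * ((k:ℝ)-1))) = x^2 * Real.exp x := by
  have hptw : ∀ k : ℕ, x ^ (k+2) / (k+2)! * ((((k+2):ℕ):ℝ) * ((((k+2):ℕ):ℝ)-1))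
      = x^2 * (x ^ k / k !) := by
    intro k
    have hk : (((k+2)! : ℕ) : ℝ) = ((k:ℝ)+2) * ((k:ℝ)+1) * (k ! : ℕ) := by
      push_cast [Nat.factorial_succ]; ring
    have h2 : ((k ! : ℕ) : ℝ) ≠ 0 := Nat.cast_ne_zero.mpr (Nat.factorial_ne_zero k)
    have h3 : ((k:ℝ)+2) * ((k:ℝ)+1) ≠ 0 := by positivity
    push_cast
    rw [hk]
    field_simp
    ring
  have hbase := Real.summable_pow_div_factorial x
  have hs : Summable (fun k : ℕ => x ^ k / k ! * ((k:ℝ) * ((k:ℝ)-1))) := by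
    rw [← _root_.summable_nat_add_iff 2]
    apply Summable.congr (hbase.mul_left (x^2))
    intro k
    exact (hptw k).symm
  refine ⟨hs, ?_⟩
  rw [Summable.tsum_eq_zero_add hs]
  have hs1 : Summable (fun k : ℕ => x ^ (k+1) / (k+1)! * ((((k+1):ℕ):ℝ) * ((((k+1):ℕ):ℝ)-1))) :=
    (_root_.summable_nat_add_iff 1).mpr hs
  rw [Summable.tsum_eq_zero_add hs1]
  simp only [Nat.cast_zero, Nat.cast_one, Nat.cast_add]
  norm_num
  calc (∑' k : ℕ, x ^ (k+1+1) / (k+1+1)! * ((((k:ℝ)+1+1)) * ((k:ℝ)+1)))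
      = ∑' k : ℕ, x^2 * (x ^ k / k !) := by
        apply tsum_congr; intro k
        have := hptw k
        push_cast at this ⊢
        convert this using 2 <;> ring_nf
    _ = x^2 * Real.exp x := by rw [_root_.tsum_mul_left, exp_tsum]

lemma sum_shift1 (x : ℝ) :
    Summable (fun k : ℕ => x ^ k / k ! * k) ∧
      (∑' k : ℕ, x ^ k / k ! * k) = x * Real.exp x := by
  have hptw : ∀ k : ℕ, x ^ (k+1) / (k+1)! * ((k:ℝ)+1) = x * (x ^ k / k !) := by
    intro k
    have hk : (((k+1)! : ℕ) : ℝ) = ((k:ℝ)+1) * (k ! : ℕ) := by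
      push_cast [Nat.factorial_succ]; ring
    have h1 : ((k:ℝ)+1) ≠ 0 := by positivity
    have h2 : ((k ! : ℕ) : ℝ) ≠ 0 := Nat.cast_ne_zero.mpr (Nat.factorial_ne_zero k)
    field_simp [hk]
    rw [hk]; ring
  have hbase := Real.summable_pow_div_factorial x
  have hs : Summable (fun k : ℕ => x ^ k / k ! * k) := by
    rw [← _root_.summable_nat_add_iff 1]
    apply Summable.congr (hbase.mul_left x)
    intro k
    have := hptw k
    push_cast at this ⊢
    linarith [this]
  refine ⟨hs, ?_⟩
  rw [Summable.tsum_eq_zero_add hs]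
  simp only [Nat.cast_zero, mul_zero, zero_add]
  calc (∑' k : ℕ, x ^ (k+1) / (k+1)! * (((k+1):ℕ):ℝ))
      = ∑' k : ℕ, x * (x ^ k / k !) := by
        apply tsum_congr; intro k
        have := hptw k
        push_cast at this ⊢
        linarith [this]
    _ = x * Real.exp x := by rw [_root_.tsum_mul_left, exp_tsum]

lemma poisson_second_moment (r : ℝ≥0) :
    Summable (fun k : ℕ => poissonPMFReal r k * ((k:ℝ) - r)^2) ∧
      (∑' k : ℕ, poissonPMFReal r k * ((k:ℝ) - r)^2) = r := by
  set x : ℝ := (r : ℝ) with hx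
  obtain ⟨hs2, ht2⟩ := sum_shift2 x
  obtain ⟨hs1, ht1⟩ := sum_shift1 x
  have hs0 := Real.summable_pow_div_factorial x
  have ht0 := exp_tsum x
  have hptw : ∀ k : ℕ, poissonPMFReal r k * ((k:ℝ) - r)^2
      = Real.exp (-x) * (x ^ k / k ! * ((k:ℝ) * ((k:ℝ)-1))
        + ((1 - 2*x) * (x ^ k / k ! * k) + x^2 * (x ^ k / k !))) := by
    intro k
    unfold poissonPMFReal
    rw [← hx]
    ring
  have hsum : Summable (fun k : ℕ => poissonPMFReal r k * ((k:ℝ) - r)^2) := by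
    apply Summable.congr (((hs2.add ((hs1.mul_left _).add (hs0.mul_left _))).mul_left
      (Real.exp (-x))))
    intro k; exact (hptw k).symm
  refine ⟨hsum, ?_⟩
  calc (∑' k : ℕ, poissonPMFReal r k * ((k:ℝ) - r)^2)
      = ∑' k : ℕ, Real.exp (-x) * (x ^ k / k ! * ((k:ℝ) * ((k:ℝ)-1))
        + ((1 - 2*x) * (x ^ k / k ! * k) + x^2 * (x ^ k / k !))) := tsum_congr hptw
    _ = Real.exp (-x) * ((∑' k : ℕ, x ^ k / k ! * ((k:ℝ) * ((k:ℝ)-1)))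
        + ((∑' k : ℕ, (1 - 2*x) * (x ^ k / k ! * k)) + ∑' k : ℕ, x^2 * (x ^ k / k !))) := by
        rw [_root_.tsum_mul_left, Summable.tsum_add hs2 ((hs1.mul_left _).add (hs0.mul_left _)),
          Summable.tsum_add (hs1.mul_left _) (hs0.mul_left _)]
    _ = r := by
        rw [_root_.tsum_mul_left, _root_.tsum_mul_left, ht2, ht1, ht0]
        have hee : rexp (-x) * rexp x = 1 := by
          rw [← Real.exp_add]; simp
        have hid : rexp (-x) * (x ^ 2 * rexp x + ((1 - 2 * x) * (x * rexp x) + x ^ 2 * rexp x))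
            = (rexp (-x) * rexp x) * x := by ring
        rw [hid, hee, one_mul]

lemma poisson_tail {Ω : Type*} [MeasurableSpace Ω] (μ : Measure Ω) (N : ℝ → Ω → ℕ)
    (h0 : ∀ ω, N 0 ω = 0)
    (hlaw : ∀ s t : ℝ, 0 ≤ s → s ≤ t → ∀ k : ℕ,
      μ {ω | N t ω - N s ω = k} = ENNReal.ofReal (poissonPMFReal (Real.toNNReal (t - s)) k))
    (s : ℝ) (hs : 0 ≤ s) (a : ℝ) (ha : 0 < a) :
    μ {ω | a ≤ |(N s ω : ℝ) - s|} ≤ ENNReal.ofReal (s / a^2) := by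
  have hcoe : ((s.toNNReal : ℝ)) = s := Real.coe_toNNReal s hs
  have hpmf : ∀ k : ℕ, μ {ω | N s ω = k} = ENNReal.ofReal (poissonPMFReal s.toNNReal k) := by
    intro k
    have h := hlaw 0 s le_rfl hs k
    rw [sub_zero] at h
    rw [← h]
    congr 1
    ext ω
    simp [h0 ω]
  set K : Set ℕ := {k : ℕ | a ≤ |(k:ℝ) - s|} with hK
  obtain ⟨hsumm, hmom⟩ := poisson_second_moment s.toNNReal
  rw [hcoe] at hsumm hmom
  have hsub : {ω | a ≤ |(N s ω : ℝ) - s|} ⊆ ⋃ k ∈ K, {ω | N s ω = k} := by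
    intro ω hω
    exact Set.mem_biUnion (by exact hω) rfl
  have hsumm' : Summable (fun k : ℕ => poissonPMFReal s.toNNReal k * (((k:ℝ) - s)/a)^2) := by
    apply Summable.congr (hsumm.mul_right ((a^2)⁻¹))
    intro k
    rw [div_pow]
    ring
  calc μ {ω | a ≤ |(N s ω : ℝ) - s|}
      ≤ μ (⋃ k ∈ K, {ω | N s ω = k}) := measure_mono hsub
    _ ≤ ∑' k : K, μ {ω | N s ω = (k:ℕ)} := measure_biUnion_le μ (Set.to_countable K) _
    _ = ∑' k : K, ENNReal.ofReal (poissonPMFReal s.toNNReal k) := by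
        exact tsum_congr fun k => hpmf k
    _ ≤ ∑' k : ℕ, ENNReal.ofReal (poissonPMFReal s.toNNReal k * (((k:ℝ) - s)/a)^2) := by
        rw [tsum_subtype K (fun k => ENNReal.ofReal (poissonPMFReal s.toNNReal k))]
        apply ENNReal.tsum_le_tsum
        intro k
        by_cases hk : k ∈ K
        · rw [Set.indicator_of_mem hk]
          apply ENNReal.ofReal_le_ofReal
          have h1 : (1:ℝ) ≤ (((k:ℝ) - s)/a)^2 := by
            have : (1:ℝ) ≤ (|(k:ℝ) - s|/a)^2 := by
              have := hk
              rw [hK] at this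
              have h2 : (1:ℝ) ≤ |(k:ℝ) - s|/a := (one_le_div ha).mpr this
              nlinarith
            calc (1:ℝ) ≤ (|(k:ℝ) - s|/a)^2 := this
              _ = (((k:ℝ) - s)/a)^2 := by rw [div_pow, div_pow, sq_abs]
          nlinarith [poissonPMFReal_nonneg (r := s.toNNReal) (n := k), h1]
        · rw [Set.indicator_of_notMem hk]
          exact _root_.zero_le
    _ = ENNReal.ofReal (∑' k : ℕ, poissonPMFReal s.toNNReal k * (((k:ℝ) - s)/a)^2) := by
        rw [ENNReal.ofReal_tsum_of_nonneg]
        · intro k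
          have := poissonPMFReal_nonneg (r := s.toNNReal) (n := k)
          positivity
        · exact hsumm'
    _ = ENNReal.ofReal (s / a^2) := by
        congr 1
        calc (∑' k : ℕ, poissonPMFReal s.toNNReal k * (((k:ℝ) - s)/a)^2)
            = ∑' k : ℕ, (poissonPMFReal s.toNNReal k * ((k:ℝ) - s)^2) * (a^2)⁻¹ := by
              apply tsum_congr; intro k; rw [div_pow]; ring
          _ = s / a^2 := by rw [_root_.tsum_mul_right, hmom]; rw [div_eq_mul_inv]

lemma det_approx (c T : ℝ) (hc : 0 < c) (hT : 0 < T) (n : ℕ)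
    (hn1 : 1 ≤ (n:ℝ)) (hn2 : 2*c ≤ (n:ℝ)) (t : ℝ) (ht0 : 0 ≤ t) (htT : t ≤ T) :
    |(1 - c/n)^(⌊(n:ℝ)*t⌋₊) - Real.exp (-(c*t))| ≤ (2*c + 2*c^2*T)/n := by
  have hnpos : (0:ℝ) < n := lt_of_lt_of_le one_pos hn1
  set x : ℝ := c/n with hxdef
  have hx0 : 0 < x := div_pos hc hnpos
  have hxhalf : x ≤ 1/2 := by
    rw [hxdef, div_le_iff₀ hnpos]; linarith
  set q : ℝ := 1 - x with hqdef
  have hq0 : (0:ℝ) < q := by simp only [hqdef]; linarith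
  have hqhalf : 1/2 ≤ q := by simp only [hqdef]; linarith
  set k : ℕ := ⌊(n:ℝ)*t⌋₊ with hkdef
  have hk_le : (k:ℝ) ≤ (n:ℝ)*t := Nat.floor_le (by positivity)
  have hk_gt : (n:ℝ)*t < (k:ℝ) + 1 := Nat.lt_floor_add_one _
  have hxn : x * (n:ℝ) = c := by rw [hxdef]; exact div_mul_cancel₀ c (ne_of_gt hnpos)
  have hxnt : x * ((n:ℝ)*t) = c*t := by rw [← mul_assoc, hxn]
  -- upper bound
  have hup : q^k - Real.exp (-(c*t)) ≤ 2*c/n := by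
    have h1 : q ≤ Real.exp (-x) := by
      have := Real.add_one_le_exp (-x); linarith
    have h2 : q^k ≤ Real.exp (-x)^k := pow_le_pow_left₀ hq0.le h1 k
    have h3 : Real.exp (-x)^k = Real.exp (-(x*k)) := by
      rw [← Real.exp_nat_mul]; ring_nf
    have h4 : -(x*k) ≤ -(c*t) + x := by
      have : x*((n:ℝ)*t - 1) ≤ x*k := by
        apply mul_le_mul_of_nonneg_left _ hx0.le
        linarith
      rw [mul_sub, hxnt] at this
      linarith
    have h5 : Real.exp (-(x*k)) ≤ Real.exp (-(c*t)) * Real.exp x := by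
      rw [← Real.exp_add]
      exact Real.exp_le_exp.mpr h4
    have hexpx : Real.exp x - 1 ≤ 2*x := by
      have ha : (1 - x) * Real.exp x ≤ 1 := by
        have h := Real.add_one_le_exp (-x)
        have h' : Real.exp (-x) * Real.exp x = 1 := by
          rw [← Real.exp_add]; simp
        nlinarith [Real.exp_pos x]
      have hb : Real.exp x ≤ 2 := by
        have he : Real.exp x ≤ Real.exp (1/2) := Real.exp_le_exp.mpr hxhalf
        have h12 : Real.exp (1/2) * Real.exp (1/2) = Real.exp 1 := by
          rw [← Real.exp_add]; norm_num
        nlinarith [Real.exp_one_lt_d9, Real.exp_pos (1/2)]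
      nlinarith
    have hmain : q^k ≤ Real.exp (-(c*t)) + (Real.exp x - 1) := by
      have hexp1 : Real.exp (-(c*t)) ≤ 1 := Real.exp_le_one_iff.mpr (by nlinarith)
      calc q^k ≤ Real.exp (-(c*t)) * Real.exp x := h2.trans (h3.le.trans h5)
        _ = Real.exp (-(c*t)) + Real.exp (-(c*t)) * (Real.exp x - 1) := by ring
        _ ≤ Real.exp (-(c*t)) + (Real.exp x - 1) := by
            have h9 : Real.exp (-(c*t)) * (Real.exp x - 1) ≤ Real.exp x - 1 :=
              mul_le_of_le_one_left (by nlinarith [Real.add_one_le_exp x]) hexp1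
            linarith
    have hfin : Real.exp x - 1 ≤ 2*c/n := by
      have : 2*x = 2*c/n := by rw [hxdef]; ring
      linarith
    linarith
  -- lower bound
  have hlo : Real.exp (-(c*t)) - q^k ≤ 2*c^2*T/n := by
    have h1 : Real.exp (-(x/q)) ≤ q := by
      have ha := Real.add_one_le_exp (x/q)
      have hb : 1/q ≤ Real.exp (x/q) := by
        have h : 1/q = 1 + x/q := by field_simp [hqdef]; linarith
        linarith
      have hc1 : (0:ℝ) < 1/q := by positivity
      have hinv := inv_anti₀ hc1 hb
      rw [Real.exp_neg]
      calc (Real.exp (x/q))⁻¹ ≤ (1/q)⁻¹ := hinv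
        _ = q := by field_simp
    have h2 : Real.exp (-(x/q))^k ≤ q^k := pow_le_pow_left₀ (Real.exp_pos _).le h1 k
    have h3 : Real.exp (-(x/q))^k = Real.exp (-(x*k/q)) := by
      rw [← Real.exp_nat_mul]; ring_nf
    have h4 : Real.exp (-(c*t/q)) ≤ Real.exp (-(x*k/q)) := by
      apply Real.exp_le_exp.mpr
      have hxk : x*k ≤ c*t := by
        rw [← hxnt]; exact mul_le_mul_of_nonneg_left hk_le hx0.le
      have := (div_le_div_iff_of_pos_right hq0).mpr hxk
      linarith
    have h5 : Real.exp (-(c*t/q)) = Real.exp (-(c*t)) * Real.exp (-(c*t*x/q)) := by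
      rw [← Real.exp_add]
      congr 1
      field_simp [hqdef]
      ring
    set y : ℝ := c*t*x/q with hydef
    have hy0 : 0 ≤ y := by positivity
    have hy_le : y ≤ 2*c^2*T/n := by
      have hq_inv : 1/q ≤ 2 := by
        rw [div_le_iff₀ hq0]; linarith
      have : y ≤ c*t*x*2 := by
        rw [hydef, div_eq_mul_inv]
        apply mul_le_mul_of_nonneg_left _ (by positivity)
        rw [← one_div]; exact hq_inv
      have hct : c*t ≤ c*T := mul_le_mul_of_nonneg_left htT hc.le
      have h2 : c*t*x*2 ≤ c*T*x*2 := by nlinarith [hct, hx0.le]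
      have h3 : c*T*x*2 = 2*c^2*T/n := by rw [hxdef]; ring
      linarith
    have h6 : 1 - Real.exp (-y) ≤ y := by
      have := Real.add_one_le_exp (-y); linarith
    have hexp1 : Real.exp (-(c*t)) ≤ 1 := Real.exp_le_one_iff.mpr (by nlinarith)
    have : Real.exp (-(c*t)) - q^k ≤ Real.exp (-(c*t)) * (1 - Real.exp (-y)) := by
      have hq_ge : Real.exp (-(c*t)) * Real.exp (-y) ≤ q^k := by
        rw [← h5]; exact h4.trans (h3 ▸ h2)
      linarith [hq_ge]
    calc Real.exp (-(c*t)) - q^k ≤ Real.exp (-(c*t)) * (1 - Real.exp (-y)) := this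
      _ ≤ 1 * (1 - Real.exp (-y)) := by
          apply mul_le_mul_of_nonneg_right hexp1
          have := Real.exp_le_one_iff.mpr (neg_nonpos.mpr hy0)
          linarith
      _ = 1 - Real.exp (-y) := one_mul _
      _ ≤ y := h6
      _ ≤ 2*c^2*T/n := hy_le
  have hb1 : (0:ℝ) ≤ 2*c/n := by positivity
  have hb2 : (0:ℝ) ≤ 2*c^2*T/n := by positivity
  have hsum : 2*c/n + 2*c^2*T/n = (2*c + 2*c^2*T)/n := by ring
  rw [abs_le]
  constructor <;> linarith

/-- grid point value of the drift function -/
noncomputable def Bfun (c T : ℝ) (m n j : ℕ) : ℝ :=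
  (n:ℝ) * (1 - (1 - c/(n:ℝ)) ^ ⌊(n:ℝ) * ((j:ℝ) * (T/(m:ℝ)))⌋₊)



/-- Fluid limit for the Lukasiewicz exploration walk of `G_Poi(n, c/n)`:
with `S⁽ⁿ⁾_k = N(n(1 - (1-c/n)^k)) - k` for a unit-rate Poisson counting process `N`,
for every `T > 0` and `ε > 0`,
`P(sup_{0≤t≤T} |S⁽ⁿ⁾_{⌊nt⌋}/n - (1 - e^{-ct} - t)| > ε) → 0` as `n → ∞`. -/
theorem lukasiewicz_fluid_limit {Ω : Type*} [MeasurableSpace Ω] (μ : Measure Ω)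
    [IsProbabilityMeasure μ] (N : ℝ → Ω → ℕ)
    (h0 : ∀ ω, N 0 ω = 0)
    (hmono : ∀ ω, ∀ s t : ℝ, s ≤ t → N s ω ≤ N t ω)
    (hlaw : ∀ s t : ℝ, 0 ≤ s → s ≤ t → ∀ k : ℕ,
      μ {ω | N t ω - N s ω = k} = ENNReal.ofReal (poissonPMFReal (Real.toNNReal (t - s)) k))
    (hindep : ∀ (n : ℕ) (t : Fin (n + 1) → ℝ), Monotone t → (∀ i, 0 ≤ t i) →
      iIndepFun
        (fun (i : Fin n) (ω : Ω) => N (t i.succ) ω - N (t i.castSucc) ω) μ)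
    (c : ℝ) (hc : 0 < c)
    (S : ℕ → ℕ → Ω → ℝ)
    (hS : ∀ n k ω, S n k ω = (N ((n : ℝ) * (1 - (1 - c / n) ^ k)) ω : ℝ) - k)
    (T ε : ℝ) (hT : 0 < T) (hε : 0 < ε) :
    Tendsto (fun n : ℕ =>
        μ {ω | ∃ t ∈ Set.Icc (0 : ℝ) T,
            ε < |S n ⌊(n : ℝ) * t⌋₊ ω / n - (1 - Real.exp (-c * t) - t)|})
      atTop (nhds 0) := by
  set δ : ℝ := ε/8 with hδdef
  have hδ : 0 < δ := by positivity
  set m : ℕ := ⌈c*T/δ⌉₊ + 1 with hmdef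
  have hm1 : 1 ≤ m := Nat.le_add_left 1 _
  have hm0 : (0:ℝ) < m := by positivity
  have hTm : 0 < T/(m:ℝ) := by positivity
  have hmδ : c*(T/(m:ℝ)) ≤ δ := by
    have hceil : c*T/δ ≤ (⌈c*T/δ⌉₊:ℝ) := Nat.le_ceil _
    have hmR : c*T/δ ≤ (m:ℝ) := by
      rw [hmdef]; push_cast; linarith
    have h1 : c*T ≤ δ*(m:ℝ) := by
      rw [div_le_iff₀ hδ] at hmR; linarith
    rw [mul_div_assoc'] at *
    rw [div_le_iff₀ hm0]
    linarith
  set C : ℝ := ((m:ℝ)+1)/δ^2 with hCdef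
  -- eventual conditions
  have ev1 : ∀ᶠ n : ℕ in atTop, (1:ℝ) ≤ (n:ℝ) :=
    tendsto_natCast_atTop_atTop.eventually_ge_atTop 1
  have ev2 : ∀ᶠ n : ℕ in atTop, 2*c ≤ (n:ℝ) :=
    tendsto_natCast_atTop_atTop.eventually_ge_atTop _
  have ev3 : ∀ᶠ n : ℕ in atTop, (2*c + 2*c^2*T)/δ ≤ (n:ℝ) :=
    tendsto_natCast_atTop_atTop.eventually_ge_atTop _
  have ev4 : ∀ᶠ n : ℕ in atTop, 1/δ ≤ (n:ℝ) :=
    tendsto_natCast_atTop_atTop.eventually_ge_atTop _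
  have hbound : ∀ᶠ n : ℕ in atTop,
      μ {ω | ∃ t ∈ Set.Icc (0 : ℝ) T,
            ε < |S n ⌊(n : ℝ) * t⌋₊ ω / n - (1 - Real.exp (-c * t) - t)|}
        ≤ ENNReal.ofReal (C / n) := by
    filter_upwards [ev1, ev2, ev3, ev4] with n hn1 hn2 hn3 hn4
    have hnpos : (0:ℝ) < n := lt_of_lt_of_le one_pos hn1
    have hq0 : (0:ℝ) ≤ 1 - c/(n:ℝ) := by
      have : c/(n:ℝ) ≤ 1/2 := by rw [div_le_iff₀ hnpos]; linarith
      linarith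
    have hq1 : 1 - c/(n:ℝ) ≤ 1 := by
      have : 0 ≤ c/(n:ℝ) := by positivity
      linarith
    have happrox : ∀ t : ℝ, 0 ≤ t → t ≤ T →
        |(1 - c/(n:ℝ))^(⌊(n:ℝ)*t⌋₊) - Real.exp (-(c*t))| ≤ δ := by
      intro t ht0 htT
      refine (det_approx c T hc hT n hn1 hn2 t ht0 htT).trans ?_
      rw [div_le_iff₀ hnpos]
      rw [div_le_iff₀ hδ] at hn3
      linarith
    have hBmono : ∀ u v : ℝ, 0 ≤ u → u ≤ v →
        (n:ℝ)*(1 - (1 - c/(n:ℝ))^⌊(n:ℝ)*u⌋₊) ≤ (n:ℝ)*(1 - (1 - c/(n:ℝ))^⌊(n:ℝ)*v⌋₊) := by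
      intro u v hu huv
      have hfl : ⌊(n:ℝ)*u⌋₊ ≤ ⌊(n:ℝ)*v⌋₊ :=
        Nat.floor_le_floor (mul_le_mul_of_nonneg_left huv hnpos.le)
      have := pow_le_pow_of_le_one hq0 hq1 hfl
      nlinarith
    have hBnonneg : ∀ w : ℝ, (1 - c/(n:ℝ))^⌊(n:ℝ)*w⌋₊ ≤ 1 := fun w => pow_le_one₀ hq0 hq1
    -- grid diff bound
    have hdiff : ∀ j : ℕ, j + 1 ≤ m →
        Bfun c T m n (j+1) - Bfun c T m n j ≤ 3*δ*(n:ℝ) := by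
      intro j hjm
      have hj0 : (0:ℝ) ≤ (j:ℝ)*(T/(m:ℝ)) := by positivity
      have hj0' : (0:ℝ) ≤ ((j:ℝ)+1)*(T/(m:ℝ)) := by positivity
      have hjT : (j:ℝ)*(T/(m:ℝ)) ≤ T := by
        have hjm' : (j:ℝ) ≤ (m:ℝ) := by exact_mod_cast Nat.le_of_succ_le hjm
        calc (j:ℝ)*(T/(m:ℝ)) ≤ (m:ℝ)*(T/(m:ℝ)) := mul_le_mul_of_nonneg_right hjm' hTm.le
          _ = T := by field_simp
      have hjT' : ((j:ℝ)+1)*(T/(m:ℝ)) ≤ T := by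
        have hjm' : (j:ℝ)+1 ≤ (m:ℝ) := by exact_mod_cast hjm
        calc ((j:ℝ)+1)*(T/(m:ℝ)) ≤ (m:ℝ)*(T/(m:ℝ)) := mul_le_mul_of_nonneg_right hjm' hTm.le
          _ = T := by field_simp
      have d1 := happrox _ hj0 hjT
      have d2 := happrox _ hj0' hjT'
      have dexp : Real.exp (-(c*((j:ℝ)*(T/(m:ℝ))))) - Real.exp (-(c*(((j:ℝ)+1)*(T/(m:ℝ)))))
          ≤ c*(T/(m:ℝ)) := by
        have hsplit : Real.exp (-(c*(((j:ℝ)+1)*(T/(m:ℝ)))))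
            = Real.exp (-(c*((j:ℝ)*(T/(m:ℝ))))) * Real.exp (-(c*(T/(m:ℝ)))) := by
          rw [← Real.exp_add]; ring_nf
        have h1 : 1 - Real.exp (-(c*(T/(m:ℝ)))) ≤ c*(T/(m:ℝ)) := by
          have := Real.add_one_le_exp (-(c*(T/(m:ℝ)))); linarith
        have h2 : Real.exp (-(c*((j:ℝ)*(T/(m:ℝ))))) ≤ 1 :=
          Real.exp_le_one_iff.mpr (by nlinarith)
        have h3 : 0 ≤ 1 - Real.exp (-(c*(T/(m:ℝ)))) := by
          have := Real.exp_le_one_iff.mpr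
            (neg_nonpos.mpr (by positivity : (0:ℝ) ≤ c*(T/(m:ℝ))))
          linarith
        have h4 := mul_le_mul_of_nonneg_right h2 h3
        rw [hsplit]
        nlinarith [h4, h1]
      have hcast : ((j+1:ℕ):ℝ) = (j:ℝ)+1 := by push_cast; ring
      rw [Bfun, Bfun, hcast]
      rw [abs_le] at d1 d2
      have hq1' : (1 - c/(n:ℝ))^⌊(n:ℝ)*((j:ℝ)*(T/(m:ℝ)))⌋₊
          - (1 - c/(n:ℝ))^⌊(n:ℝ)*(((j:ℝ)+1)*(T/(m:ℝ)))⌋₊ ≤ 3*δ := by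
        have := hmδ
        linarith [d1.2, d2.1]
      nlinarith [hq1']
    -- pointwise inclusion
    have hsub : {ω | ∃ t ∈ Set.Icc (0 : ℝ) T,
            ε < |S n ⌊(n : ℝ) * t⌋₊ ω / n - (1 - Real.exp (-c * t) - t)|}
        ⊆ ⋃ j ∈ Finset.range (m+1),
            {ω | δ*(n:ℝ) ≤ |((N (Bfun c T m n j) ω : ℕ):ℝ) - Bfun c T m n j|} := by
      rintro ω ⟨t, ⟨ht0, htT⟩, hlt⟩
      set k : ℕ := ⌊(n:ℝ)*t⌋₊ with hkdef
      set a : ℝ := (n:ℝ)*(1 - (1 - c/(n:ℝ))^k) with hadef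
      have hX : 6*δ*(n:ℝ) < |((N a ω : ℕ):ℝ) - a| := by
        have hdecomp : S n k ω / n - (1 - Real.exp (-c * t) - t)
            = (((N a ω : ℕ):ℝ) - a)/n
              + ((1 - (1 - c/(n:ℝ))^k) - (1 - Real.exp (-(c*t)))) + (t - (k:ℝ)/n) := by
          rw [hS n k ω, neg_mul]
          rw [hadef]
          field_simp
          ring
        have e1 : |(1 - (1 - c/(n:ℝ))^k) - (1 - Real.exp (-(c*t)))| ≤ δ := by
          have := happrox t ht0 htT
          rw [← hkdef] at this
          calc |(1 - (1 - c/(n:ℝ))^k) - (1 - Real.exp (-(c*t)))|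
              = |(1 - c/(n:ℝ))^k - Real.exp (-(c*t))| := by
                rw [abs_sub_comm]; congr 1; ring
            _ ≤ δ := this
        have e2 : |t - (k:ℝ)/n| ≤ δ := by
          have hk_le : (k:ℝ) ≤ (n:ℝ)*t := Nat.floor_le (by positivity)
          have hk_gt : (n:ℝ)*t < (k:ℝ) + 1 := Nat.lt_floor_add_one _
          have h1 : (k:ℝ)/n ≤ t := by rw [div_le_iff₀ hnpos]; linarith
          have h2 : t - (k:ℝ)/n ≤ 1/n := by
            rw [sub_le_iff_le_add, ← add_div, le_div_iff₀ hnpos]; linarith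
          have h3 : 1/(n:ℝ) ≤ δ := by
            rw [div_le_iff₀ hnpos]
            rw [div_le_iff₀ hδ] at hn4
            linarith
          rw [abs_of_nonneg (by linarith)]
          linarith
        have habs : ε < |(((N a ω : ℕ):ℝ) - a)/n| + δ + δ := by
          have h := abs_add_le ((((N a ω : ℕ):ℝ) - a)/n
            + ((1 - (1 - c/(n:ℝ))^k) - (1 - Real.exp (-(c*t))))) (t - (k:ℝ)/n)
          have h' := abs_add_le ((((N a ω : ℕ):ℝ) - a)/n)
            ((1 - (1 - c/(n:ℝ))^k) - (1 - Real.exp (-(c*t))))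
          rw [hdecomp] at hlt
          linarith
        have : 6*δ < |(((N a ω : ℕ):ℝ) - a)|/n := by
          rw [abs_div, abs_of_pos hnpos] at habs
          rw [hδdef] at habs ⊢
          linarith
        rw [lt_div_iff₀ hnpos] at this
        linarith
      -- grid index
      set j : ℕ := min (⌊t/(T/(m:ℝ))⌋₊) (m-1) with hjdef
      have hj_le : j ≤ m - 1 := min_le_right _ _
      have hjm : j + 1 ≤ m := by omega
      have htj : (j:ℝ)*(T/(m:ℝ)) ≤ t := by
        have h1 : (j:ℝ) ≤ t/(T/(m:ℝ)) := by
          have hle : j ≤ ⌊t/(T/(m:ℝ))⌋₊ := min_le_left _ _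
          calc (j:ℝ) ≤ (⌊t/(T/(m:ℝ))⌋₊:ℝ) := Nat.cast_le.mpr hle
            _ ≤ t/(T/(m:ℝ)) := Nat.floor_le (by positivity)
        calc (j:ℝ)*(T/(m:ℝ)) ≤ (t/(T/(m:ℝ)))*(T/(m:ℝ)) :=
              mul_le_mul_of_nonneg_right h1 hTm.le
          _ = t := div_mul_cancel₀ t (ne_of_gt hTm)
      have htj1 : t ≤ ((j:ℝ)+1)*(T/(m:ℝ)) := by
        rcases le_or_gt (⌊t/(T/(m:ℝ))⌋₊) (m-1) with hcase|hcase
        · have hjeq : j = ⌊t/(T/(m:ℝ))⌋₊ := min_eq_left hcase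
          have h2 : t/(T/(m:ℝ)) < (j:ℝ)+1 := by
            rw [hjeq]
            exact Nat.lt_floor_add_one _
          calc t = (t/(T/(m:ℝ)))*(T/(m:ℝ)) := (div_mul_cancel₀ t (ne_of_gt hTm)).symm
            _ ≤ ((j:ℝ)+1)*(T/(m:ℝ)) := mul_le_mul_of_nonneg_right h2.le hTm.le
        · have hjeq : j = m-1 := min_eq_right hcase.le
          have hcastm : (j:ℝ)+1 = (m:ℝ) := by
            rw [hjeq]
            rw [Nat.cast_sub hm1]
            push_cast; ring
          rw [hcastm]
          calc t ≤ T := htT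
            _ = (m:ℝ)*(T/(m:ℝ)) := by field_simp
      -- B sandwich
      have hBja : Bfun c T m n j ≤ a := by
        rw [Bfun, hadef, hkdef]
        exact hBmono _ _ (by positivity) htj
      have haBj1 : a ≤ Bfun c T m n (j+1) := by
        rw [Bfun, hadef, hkdef]
        have hcast : ((j+1:ℕ):ℝ) = (j:ℝ)+1 := by push_cast; ring
        rw [hcast]
        exact hBmono _ _ ht0 htj1
      have hdiffj := hdiff j hjm
      rcases le_or_gt 0 (((N a ω : ℕ):ℝ) - a) with hsgn|hsgn
      · -- upper deviation: use grid point j+1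
        rw [abs_of_nonneg hsgn] at hX
        have hNmono : ((N a ω : ℕ):ℝ) ≤ ((N (Bfun c T m n (j+1)) ω : ℕ):ℝ) :=
          Nat.cast_le.mpr (hmono ω _ _ haBj1)
        have hY : δ*(n:ℝ) ≤ ((N (Bfun c T m n (j+1)) ω : ℕ):ℝ) - Bfun c T m n (j+1) := by
          nlinarith [hδ.le, hnpos.le]
        exact Set.mem_iUnion₂.mpr ⟨j+1, Finset.mem_range.mpr (by omega),
          le_trans hY (le_abs_self _)⟩
      · -- lower deviation: use grid point j
        rw [abs_of_neg (by linarith)] at hX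
        have hNmono : ((N (Bfun c T m n j) ω : ℕ):ℝ) ≤ ((N a ω : ℕ):ℝ) :=
          Nat.cast_le.mpr (hmono ω _ _ hBja)
        have hZ : δ*(n:ℝ) ≤ -(((N (Bfun c T m n j) ω : ℕ):ℝ) - Bfun c T m n j) := by
          nlinarith [hδ.le, hnpos.le]
        exact Set.mem_iUnion₂.mpr ⟨j, Finset.mem_range.mpr (by omega),
          le_trans hZ (neg_le_abs _)⟩
    -- measure bound
    calc μ {ω | ∃ t ∈ Set.Icc (0 : ℝ) T,
            ε < |S n ⌊(n : ℝ) * t⌋₊ ω / n - (1 - Real.exp (-c * t) - t)|}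
        ≤ μ (⋃ j ∈ Finset.range (m+1),
            {ω | δ*(n:ℝ) ≤ |((N (Bfun c T m n j) ω : ℕ):ℝ) - Bfun c T m n j|}) :=
          measure_mono hsub
      _ ≤ ∑ j ∈ Finset.range (m+1),
            μ {ω | δ*(n:ℝ) ≤ |((N (Bfun c T m n j) ω : ℕ):ℝ) - Bfun c T m n j|} :=
          measure_biUnion_finset_le _ _
      _ ≤ ∑ j ∈ Finset.range (m+1), ENNReal.ofReal (1/(δ^2*(n:ℝ))) := by
          apply Finset.sum_le_sum
          intro j _
          have hB0 : 0 ≤ Bfun c T m n j := by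
            rw [Bfun]
            have := hBnonneg ((j:ℝ)*(T/(m:ℝ)))
            nlinarith
          have hBn : Bfun c T m n j ≤ (n:ℝ) := by
            rw [Bfun]
            have hqk : (0:ℝ) ≤ (1 - c/(n:ℝ))^⌊(n:ℝ)*((j:ℝ)*(T/(m:ℝ)))⌋₊ :=
              pow_nonneg hq0 _
            nlinarith
          refine (poisson_tail μ N h0 hlaw _ hB0 (δ*(n:ℝ)) (by positivity)).trans ?_
          apply ENNReal.ofReal_le_ofReal
          rw [div_le_div_iff₀ (by positivity) (by positivity)]
          nlinarith
      _ = (m+1) • ENNReal.ofReal (1/(δ^2*(n:ℝ))) := by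
          rw [Finset.sum_const, Finset.card_range]
      _ ≤ ENNReal.ofReal (C / n) := by
          rw [nsmul_eq_mul]
          have h1 : ((m+1:ℕ):ℝ≥0∞) = ENNReal.ofReal ((m+1:ℕ):ℝ) := by
            rw [ENNReal.ofReal_natCast]
          rw [h1, ← ENNReal.ofReal_mul (by positivity)]
          apply ENNReal.ofReal_le_ofReal
          rw [hCdef]
          push_cast
          rw [mul_one_div]
          try rw [div_div]
  -- conclude
  have htop : Tendsto (fun n : ℕ => ENNReal.ofReal (C / n)) atTop (nhds 0) := by
    have h := ENNReal.tendsto_ofReal (tendsto_const_div_atTop_nhds_zero_nat C)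
    simpa using h
  refine tendsto_of_tendsto_of_tendsto_of_le_of_le' tendsto_const_nhds htop ?_ hbound
  exact Eventually.of_forall (fun n => by simp)
end
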